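/- Let (X_n)_{n≥1} be a sequence of random variables adapted to a filtration (F_n)_{n≥0} with 0 ≤ X_n ≤ B almost surely for some constant B > 0. Then for every δ ∈ (0,1), with probability at least 1 − δ, simultaneously for all n ≥ 1 it holds that ∑_{i=1}^n E[X_i | F_{i−1}] ≤ 2·∑_{i=1}^n X_i + 4·B·log(2n/δ). -/

import Mathlib

open MeasureTheory ProbabilityTheory Finset

lemma aux_condExp_exp_neg {Ω : Type*} {m0 : MeasurableSpace Ω} {μ : Measure Ω}
    [IsProbabilityMeasure μ] {m : MeasurableSpace Ω} (hm : m ≤ m0) {Y : Ω → ℝ}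
    (hY : AEStronglyMeasurable[m0] Y μ)
    (hbd : ∀ᵐ ω ∂μ, Y ω ∈ Set.Icc (0:ℝ) 1) :
    μ[fun ω => Real.exp (-Y ω) | m] ≤ᵐ[μ]
      fun ω => Real.exp (-((1 - Real.exp (-1)) * (μ[Y | m]) ω)) := by
  set c : ℝ := 1 - Real.exp (-1) with hc
  have hYint : Integrable Y μ :=
    Integrable.mono' (integrable_const 1) hY <| by
      filter_upwards [hbd] with ω hω
      rw [Real.norm_eq_abs, abs_le]; constructor <;> linarith [hω.1, hω.2]
  have hexp_meas : AEStronglyMeasurable[m0] (fun ω => Real.exp (-Y ω)) μ :=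
    Real.continuous_exp.comp_aestronglyMeasurable hY.neg
  have hexp_int : Integrable (fun ω => Real.exp (-Y ω)) μ :=
    Integrable.mono' (integrable_const 1) hexp_meas <| by
      filter_upwards [hbd] with ω hω
      rw [Real.norm_eq_abs, abs_of_pos (Real.exp_pos _)]
      calc Real.exp (-Y ω) ≤ Real.exp 0 := Real.exp_le_exp.2 (by linarith [hω.1])
        _ = 1 := Real.exp_zero
  have hlin_int : Integrable (fun ω => 1 - c * Y ω) μ :=
    (integrable_const 1).sub (hYint.const_mul c)
  have hpt : (fun ω => Real.exp (-Y ω)) ≤ᵐ[μ] fun ω => 1 - c * Y ω := by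
    filter_upwards [hbd] with ω hω
    obtain ⟨hω0, hω1⟩ := hω
    have h := convexOn_exp.2 (Set.mem_univ (-1:ℝ)) (Set.mem_univ (0:ℝ))
      hω0 (show (0:ℝ) ≤ 1 - Y ω by linarith) (by ring)
    simp only [smul_eq_mul, mul_neg_one, mul_zero, add_zero, Real.exp_zero] at h
    calc Real.exp (-Y ω) ≤ Y ω * Real.exp (-1) + (1 - Y ω) * 1 := h
      _ = 1 - c * Y ω := by rw [hc]; ring
  have h1 : μ[fun ω => Real.exp (-Y ω) | m] ≤ᵐ[μ] μ[fun ω => 1 - c * Y ω | m] :=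
    condExp_mono hexp_int hlin_int hpt
  have h2 : μ[fun ω => 1 - c * Y ω | m] =ᵐ[μ] fun ω => 1 - c * (μ[Y | m]) ω := by
    have he : (fun ω => 1 - c * Y ω) = (fun _ => (1:ℝ)) - c • Y := by
      funext ω; simp [smul_eq_mul]
    rw [he]
    refine (condExp_sub (integrable_const 1) (hYint.smul c) m).trans ?_
    have h3 := condExp_smul (μ := μ) (m := m) c Y
    filter_upwards [h3] with ω h3ω
    have h4 : (μ[fun _ => (1:ℝ) | m]) ω = 1 := by
      rw [condExp_const hm (1:ℝ)]
    simp only [Pi.sub_apply, h4, h3ω, Pi.smul_apply, smul_eq_mul]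
  filter_upwards [h1, h2] with ω h1ω h2ω
  calc (μ[fun ω => Real.exp (-Y ω) | m]) ω ≤ 1 - c * (μ[Y | m]) ω := h2ω ▸ h1ω
    _ ≤ Real.exp (-(c * (μ[Y | m]) ω)) := by
        have := Real.add_one_le_exp (-(c * (μ[Y | m]) ω)); linarith

/-- Multiplicative anytime bound for adapted bounded nonnegative sequences: with
probability at least `1 - δ`, simultaneously for all `n ≥ 1`,
`∑_{i=1}^n E[X i | ℱ (i-1)] ≤ 2 ∑_{i=1}^n X i + 4 B log(2n/δ)`. -/
theorem anytime_multiplicative_bound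
    {Ω : Type*} {m0 : MeasurableSpace Ω} {μ : Measure Ω} [IsProbabilityMeasure μ]
    (ℱ : Filtration ℕ m0) (X : ℕ → Ω → ℝ) (B : ℝ) (hB : 0 < B)
    (hadp : ∀ n, 1 ≤ n → StronglyMeasurable[ℱ n] (X n))
    (hbdd : ∀ n, 1 ≤ n → ∀ᵐ ω ∂μ, X n ω ∈ Set.Icc (0 : ℝ) B)
    (δ : ℝ) (hδ : δ ∈ Set.Ioo (0 : ℝ) 1) :
    ENNReal.ofReal (1 - δ) ≤
      μ {ω | ∀ n : ℕ, 1 ≤ n →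
        ∑ i ∈ Finset.Icc 1 n, (μ[X i | ℱ (i - 1)]) ω ≤
          2 * ∑ i ∈ Finset.Icc 1 n, X i ω + 4 * B * Real.log (2 * n / δ)} := by
  obtain ⟨hδ0, hδ1⟩ := hδ
  set c : ℝ := 1 - Real.exp (-1) with hc
  have hexp1 : (2:ℝ) ≤ Real.exp 1 := by
    have := Real.add_one_le_exp (1:ℝ); linarith
  have hcge : (1:ℝ)/2 ≤ c := by
    have h1 : Real.exp (-1) ≤ 1/2 := by
      rw [Real.exp_neg]
      calc (Real.exp 1)⁻¹ ≤ (2:ℝ)⁻¹ := inv_anti₀ (by norm_num) hexp1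
        _ = 1/2 := by norm_num
    rw [hc]; linarith
  have hcle : c ≤ 1 := by
    have := Real.exp_pos (-1); rw [hc]; linarith
  -- abbreviation for the conditional expectations
  set E : ℕ → Ω → ℝ := fun i => μ[X i | ℱ (i - 1)] with hE
  have hEi : ∀ i, (μ[X i | ℱ (i - 1)]) = E i := fun i => by rw [hE]
  simp only [hEi]
  -- basic measurability and integrability facts
  have hXsm : ∀ i, 1 ≤ i → StronglyMeasurable (X i) := fun i hi => (hadp i hi).mono (ℱ.le i)
  have hXint : ∀ i, 1 ≤ i → Integrable (X i) μ := fun i hi =>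
    Integrable.mono' (integrable_const B) (hXsm i hi).aestronglyMeasurable <| by
      filter_upwards [hbdd i hi] with ω hω
      rw [Real.norm_eq_abs, abs_le]; exact ⟨by linarith [hω.1, hB], hω.2⟩
  have hEsm : ∀ i, StronglyMeasurable[ℱ (i - 1)] (E i) := fun i => stronglyMeasurable_condExp
  have hgood : ∀ᵐ ω ∂μ, ∀ i, 1 ≤ i →
      (0 ≤ E i ω ∧ E i ω ≤ B ∧ 0 ≤ X i ω ∧ X i ω ≤ B) := by
    rw [ae_all_iff]
    intro i
    by_cases hi : 1 ≤ i
    · have h0 : 0 ≤ᵐ[μ] E i :=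
        condExp_nonneg (by filter_upwards [hbdd i hi] with ω hω using hω.1)
      have h1 : E i ≤ᵐ[μ] fun _ => B := by
        have h2 := condExp_mono (m := ℱ (i - 1)) (hXint i hi) (integrable_const B)
          (by filter_upwards [hbdd i hi] with ω hω using hω.2)
        rw [condExp_const (ℱ.le (i - 1)) B] at h2
        exact h2
      filter_upwards [h0, h1, hbdd i hi] with ω hω0 hω1 hω2 _
      exact ⟨hω0, hω1, hω2.1, hω2.2⟩
    · exact Filter.Eventually.of_forall fun ω h => absurd h hi
  -- the exponential supermartingale-like process
  set S : ℕ → Ω → ℝ := fun n ω => ∑ i ∈ Finset.Icc 1 n, (c * E i ω - X i ω) / B with hS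
  have hSsm : ∀ n, StronglyMeasurable[ℱ n] (S n) := by
    intro n
    rw [hS]
    refine Finset.stronglyMeasurable_fun_sum _ fun i hi => ?_
    obtain ⟨hi1, hin⟩ := Finset.mem_Icc.1 hi
    have hterm : StronglyMeasurable[ℱ n] fun ω => (c * E i ω - X i ω) * B⁻¹ :=
      ((stronglyMeasurable_const.mul ((hEsm i).mono (ℱ.mono (by omega)))).sub
        ((hadp i hi1).mono (ℱ.mono hin))).mul stronglyMeasurable_const
    simpa [div_eq_mul_inv] using hterm
  have hSbound : ∀ n, ∀ᵐ ω ∂μ, S n ω ≤ n := by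
    intro n
    filter_upwards [hgood] with ω hω
    rw [hS]
    calc ∑ i ∈ Finset.Icc 1 n, (c * E i ω - X i ω) / B
        ≤ ∑ _i ∈ Finset.Icc 1 n, (1:ℝ) := by
          refine Finset.sum_le_sum fun i hi => ?_
          obtain ⟨hi1, _⟩ := Finset.mem_Icc.1 hi
          obtain ⟨h1, h2, h3, _⟩ := hω i hi1
          rw [div_le_one hB]
          nlinarith
      _ = n := by simp [Nat.card_Icc]
  have hexpS_sm : ∀ n, StronglyMeasurable fun ω => Real.exp (S n ω) := fun n =>
    Real.continuous_exp.comp_stronglyMeasurable ((hSsm n).mono (ℱ.le n))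
  have hexpS_int : ∀ n, Integrable (fun ω => Real.exp (S n ω)) μ := by
    intro n
    refine Integrable.mono' (integrable_const (Real.exp n)) (hexpS_sm n).aestronglyMeasurable ?_
    filter_upwards [hSbound n] with ω hω
    rw [Real.norm_eq_abs, abs_of_pos (Real.exp_pos _)]
    exact Real.exp_le_exp.2 hω
  -- the key supermartingale estimate
  have key : ∀ n, ∫ ω, Real.exp (S n ω) ∂μ ≤ 1 := by
    intro n
    induction n with
    | zero =>
      have h0 : ∀ ω : Ω, S 0 ω = 0 := by
        intro ω; rw [hS]; simp
      simp [h0]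
    | succ n ih =>
      set f : Ω → ℝ := fun ω => Real.exp (S n ω + c * E (n+1) ω / B) with hf_def
      set h : Ω → ℝ := fun ω => Real.exp (-(X (n+1) ω / B)) with hh_def
      have hsplit : ∀ ω, Real.exp (S (n+1) ω) = f ω * h ω := by
        intro ω
        have h1 : S (n+1) ω = S n ω + (c * E (n+1) ω - X (n+1) ω) / B := by
          rw [hS]; exact Finset.sum_Icc_succ_top (by omega) _
        rw [h1, hf_def, hh_def, ← Real.exp_add]
        congr 1
        field_simp
        ring
      have hEn_sm : StronglyMeasurable[ℱ n] (E (n+1)) := hEsm (n+1)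
      have hf_sm : StronglyMeasurable[ℱ n] f := by
        rw [hf_def]
        apply Real.continuous_exp.comp_stronglyMeasurable
        have hterm : StronglyMeasurable[ℱ n] fun ω => S n ω + c * E (n+1) ω * B⁻¹ :=
          (hSsm n).add ((stronglyMeasurable_const.mul hEn_sm).mul stronglyMeasurable_const)
        simpa [div_eq_mul_inv] using hterm
      have hY_sm : StronglyMeasurable fun ω => X (n+1) ω / B := by
        have := (hXsm (n+1) (by omega)).mul (stronglyMeasurable_const (b := B⁻¹))
        simpa [div_eq_mul_inv, Pi.mul_def] using this
      have hh_sm : StronglyMeasurable h := by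
        rw [hh_def]
        exact Real.continuous_exp.comp_stronglyMeasurable hY_sm.neg
      have hf_bd : ∀ᵐ ω ∂μ, 0 ≤ f ω ∧ f ω ≤ Real.exp (n + 1) := by
        filter_upwards [hSbound n, hgood] with ω h1 h2
        refine ⟨(Real.exp_pos _).le, ?_⟩
        rw [hf_def]
        apply Real.exp_le_exp.2
        obtain ⟨hE0, hEB, -, -⟩ := h2 (n+1) (by omega)
        have h3 : c * E (n+1) ω / B ≤ 1 := by
          rw [div_le_one hB]; nlinarith
        push_cast
        linarith
      have hh_bd : ∀ᵐ ω ∂μ, 0 ≤ h ω ∧ h ω ≤ 1 := by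
        filter_upwards [hgood] with ω hω
        obtain ⟨-, -, hX0, -⟩ := hω (n+1) (by omega)
        refine ⟨(Real.exp_pos _).le, ?_⟩
        rw [hh_def]
        calc Real.exp (-(X (n+1) ω / B)) ≤ Real.exp 0 := by
              apply Real.exp_le_exp.2
              have : 0 ≤ X (n+1) ω / B := div_nonneg hX0 hB.le
              linarith
          _ = 1 := Real.exp_zero
      have hf_int : Integrable f μ := by
        refine Integrable.mono' (integrable_const (Real.exp (n+1)))
          (hf_sm.mono (ℱ.le n)).aestronglyMeasurable ?_
        filter_upwards [hf_bd] with ω hω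
        rw [Real.norm_eq_abs, abs_of_nonneg hω.1]; exact_mod_cast hω.2
      have hh_int : Integrable h μ := by
        refine Integrable.mono' (integrable_const 1) hh_sm.aestronglyMeasurable ?_
        filter_upwards [hh_bd] with ω hω
        rw [Real.norm_eq_abs, abs_of_nonneg hω.1]; exact hω.2
      have hfh_int : Integrable (f * h) μ := by
        refine Integrable.mono' (integrable_const (Real.exp (n+1)))
          ((hf_sm.mono (ℱ.le n)).mul hh_sm).aestronglyMeasurable ?_
        filter_upwards [hf_bd, hh_bd] with ω h1 h2
        rw [Pi.mul_apply, Real.norm_eq_abs, abs_of_nonneg (mul_nonneg h1.1 h2.1)]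
        calc f ω * h ω ≤ Real.exp (n+1) * 1 := by
              apply mul_le_mul h1.2 h2.2 h2.1 (Real.exp_pos _).le
          _ = Real.exp (n+1) := mul_one _
      -- conditional expectation bound via convexity
      have hYbd : ∀ᵐ ω ∂μ, X (n+1) ω / B ∈ Set.Icc (0:ℝ) 1 := by
        filter_upwards [hbdd (n+1) (by omega)] with ω hω
        exact ⟨div_nonneg hω.1 hB.le, (div_le_one hB).2 hω.2⟩
      have haux := aux_condExp_exp_neg (ℱ.le n) hY_sm.aestronglyMeasurable hYbd
      have hsc : μ[fun ω => X (n+1) ω / B | ℱ n] =ᵐ[μ] fun ω => E (n+1) ω / B := by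
        have h1 : (fun ω => X (n+1) ω / B) = B⁻¹ • X (n+1) := by
          funext ω; simp [smul_eq_mul]; ring
        rw [h1]
        filter_upwards [condExp_smul (μ := μ) (m := ℱ n) B⁻¹ (X (n+1))] with ω hω
        rw [hω]
        have h2 : E (n+1) = μ[X (n+1) | ℱ n] := by rw [hE]; norm_num
        rw [h2]
        simp [smul_eq_mul]
        ring
      have hcond : μ[h | ℱ n] ≤ᵐ[μ] fun ω => Real.exp (-(c * (E (n+1) ω / B))) := by
        rw [hh_def]
        filter_upwards [haux, hsc] with ω h1 h2
        calc (μ[fun ω => Real.exp (-(X (n+1) ω / B)) | ℱ n]) ω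
            ≤ Real.exp (-(c * (μ[fun ω => X (n+1) ω / B | ℱ n]) ω)) := h1
          _ = Real.exp (-(c * (E (n+1) ω / B))) := by rw [h2]
      have hmul : μ[f * h | ℱ n] =ᵐ[μ] f * μ[h | ℱ n] :=
        condExp_mul_of_stronglyMeasurable_left hf_sm hfh_int hh_int
      calc ∫ ω, Real.exp (S (n+1) ω) ∂μ = ∫ ω, (f * h) ω ∂μ := by
            apply integral_congr_ae
            exact Filter.Eventually.of_forall fun ω => hsplit ω
        _ = ∫ ω, (μ[f * h | ℱ n]) ω ∂μ := (integral_condExp (ℱ.le n)).symm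
        _ = ∫ ω, (f * μ[h | ℱ n]) ω ∂μ := integral_congr_ae hmul
        _ ≤ ∫ ω, Real.exp (S n ω) ∂μ := by
            refine integral_mono_ae (integrable_condExp.congr hmul) (hexpS_int n) ?_
            filter_upwards [hcond, hf_bd] with ω h1 h2
            rw [Pi.mul_apply]
            calc f ω * (μ[h | ℱ n]) ω
                ≤ f ω * Real.exp (-(c * (E (n+1) ω / B))) :=
                  mul_le_mul_of_nonneg_left h1 h2.1
              _ = Real.exp (S n ω) := by
                  rw [hf_def, ← Real.exp_add]; congr 1; ring
        _ ≤ 1 := ih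
  -- Markov inequality for each fixed n
  have hbadn : ∀ n, 1 ≤ n →
      μ {ω | 1 ≤ n ∧ ¬ (∑ i ∈ Finset.Icc 1 n, E i ω ≤
          2 * ∑ i ∈ Finset.Icc 1 n, X i ω + 4 * B * Real.log (2 * n / δ))} ≤
        ENNReal.ofReal (δ^2/4 * (1/(n:ℝ)^2)) := by
    intro n hn
    set r : ℝ := 2 * n / δ with hr_def
    have hn1 : (1:ℝ) ≤ n := by exact_mod_cast hn
    have hr1 : 1 ≤ r := by
      rw [hr_def, le_div_iff₀ hδ0]; nlinarith
    have hr0 : (0:ℝ) < r := by linarith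
    have hL0 : 0 ≤ Real.log r := Real.log_nonneg hr1
    have hincl : {ω | 1 ≤ n ∧ ¬ (∑ i ∈ Finset.Icc 1 n, E i ω ≤
          2 * ∑ i ∈ Finset.Icc 1 n, X i ω + 4 * B * Real.log (2 * n / δ))} ≤ᵐ[μ]
        {ω | r^2 ≤ Real.exp (S n ω)} := by
      filter_upwards [hgood] with ω hg hmem
      obtain ⟨-, hP⟩ := hmem
      rw [not_le] at hP
      have hSE0 : 0 ≤ ∑ i ∈ Finset.Icc 1 n, E i ω :=
        Finset.sum_nonneg fun i hi => (hg i (Finset.mem_Icc.1 hi).1).1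
      have hSval : S n ω =
          (c * ∑ i ∈ Finset.Icc 1 n, E i ω - ∑ i ∈ Finset.Icc 1 n, X i ω) / B := by
        show (∑ i ∈ Finset.Icc 1 n, (c * E i ω - X i ω) / B) = _
        rw [← Finset.sum_div, Finset.sum_sub_distrib, ← Finset.mul_sum]
      have hexp : 2 * Real.log r ≤ S n ω := by
        rw [hSval, le_div_iff₀ hB]
        rw [← hr_def] at hP
        nlinarith [mul_le_mul_of_nonneg_right hcge hSE0]
      show r^2 ≤ Real.exp (S n ω)
      calc r^2 = Real.exp (Real.log r) ^ 2 := by rw [Real.exp_log hr0]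
        _ = Real.exp (2 * Real.log r) := by
            rw [sq, ← Real.exp_add, two_mul]
        _ ≤ Real.exp (S n ω) := Real.exp_le_exp.2 hexp
    have hmark := mul_meas_ge_le_integral_of_nonneg (μ := μ)
      (f := fun ω => Real.exp (S n ω))
      (Filter.Eventually.of_forall fun ω => (Real.exp_pos _).le) (hexpS_int n) (r^2)
    have hr2 : (0:ℝ) < r^2 := by positivity
    have htoReal : (μ {ω | r^2 ≤ Real.exp (S n ω)}).toReal ≤ 1/r^2 := by
      rw [le_div_iff₀ hr2]
      calc (μ {ω | r^2 ≤ Real.exp (S n ω)}).toReal * r^2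
          = r^2 * (μ {ω | r^2 ≤ Real.exp (S n ω)}).toReal := mul_comm _ _
        _ ≤ ∫ ω, Real.exp (S n ω) ∂μ := hmark
        _ ≤ 1 := key n
    have hval : 1/r^2 = δ^2/4 * (1/(n:ℝ)^2) := by
      rw [hr_def]
      field_simp
      ring
    calc μ {ω | 1 ≤ n ∧ ¬ (∑ i ∈ Finset.Icc 1 n, E i ω ≤
          2 * ∑ i ∈ Finset.Icc 1 n, X i ω + 4 * B * Real.log (2 * n / δ))}
        ≤ μ {ω | r^2 ≤ Real.exp (S n ω)} := measure_mono_ae hincl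
      _ = ENNReal.ofReal ((μ {ω | r^2 ≤ Real.exp (S n ω)}).toReal) :=
          (ENNReal.ofReal_toReal (measure_ne_top μ _)).symm
      _ ≤ ENNReal.ofReal (δ^2/4 * (1/(n:ℝ)^2)) := by
          apply ENNReal.ofReal_le_ofReal
          rw [← hval]; exact htoReal
  -- assemble: union bound
  set T := {ω | ∀ n : ℕ, 1 ≤ n → ∑ i ∈ Finset.Icc 1 n, E i ω ≤
      2 * ∑ i ∈ Finset.Icc 1 n, X i ω + 4 * B * Real.log (2 * n / δ)} with hT_def
  have hEm : ∀ i, Measurable (E i) := fun i =>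
    ((hEsm i).mono (ℱ.le _)).measurable
  have hTm : MeasurableSet T := by
    rw [hT_def, Set.setOf_forall]
    refine MeasurableSet.iInter fun n => ?_
    by_cases hn : 1 ≤ n
    · simp only [hn, true_implies]
      refine measurableSet_le (Finset.measurable_sum _ fun i _ => hEm i) ?_
      refine Measurable.add ?_ measurable_const
      exact (Finset.measurable_sum _ fun i hi =>
        (hXsm i (Finset.mem_Icc.1 hi).1).measurable).const_mul 2
    · simp only [hn, false_implies]
      simp
  have hTc : Tᶜ ⊆ ⋃ n, {ω | 1 ≤ n ∧ ¬ (∑ i ∈ Finset.Icc 1 n, E i ω ≤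
      2 * ∑ i ∈ Finset.Icc 1 n, X i ω + 4 * B * Real.log (2 * n / δ))} := by
    intro ω hω
    rw [hT_def] at hω
    simp only [Set.mem_compl_iff, Set.mem_setOf_eq] at hω
    push_neg at hω
    obtain ⟨n, hn1, hn2⟩ := hω
    exact Set.mem_iUnion.2 ⟨n, hn1, not_le.2 hn2⟩
  have hsum : HasSum (fun n : ℕ => δ^2/4 * (1/(n:ℝ)^2)) (δ^2/4 * (Real.pi^2/6)) :=
    hasSum_zeta_two.mul_left _
  have htsum : ∑' n : ℕ, ENNReal.ofReal (δ^2/4 * (1/(n:ℝ)^2)) =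
      ENNReal.ofReal (δ^2/4 * (Real.pi^2/6)) := by
    rw [← hsum.tsum_eq, ENNReal.ofReal_tsum_of_nonneg (fun n => by positivity) hsum.summable]
  have hcompl : μ Tᶜ ≤ ENNReal.ofReal δ := by
    refine le_trans (measure_mono hTc) ?_
    refine le_trans (measure_iUnion_le _) ?_
    have hterm : ∀ n : ℕ, μ {ω | 1 ≤ n ∧ ¬ (∑ i ∈ Finset.Icc 1 n, E i ω ≤
        2 * ∑ i ∈ Finset.Icc 1 n, X i ω + 4 * B * Real.log (2 * n / δ))} ≤
        ENNReal.ofReal (δ^2/4 * (1/(n:ℝ)^2)) := by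
      intro n
      by_cases hn : 1 ≤ n
      · exact hbadn n hn
      · have hempty : {ω | 1 ≤ n ∧ ¬ (∑ i ∈ Finset.Icc 1 n, E i ω ≤
            2 * ∑ i ∈ Finset.Icc 1 n, X i ω + 4 * B * Real.log (2 * n / δ))} = ∅ := by
          ext ω; simp [hn]
        rw [hempty]; simp
    refine le_trans (ENNReal.tsum_le_tsum hterm) ?_
    rw [htsum]
    apply ENNReal.ofReal_le_ofReal
    have hπ : Real.pi^2 ≤ 16 := by nlinarith [Real.pi_le_four, Real.pi_pos]
    nlinarith [sq_nonneg δ, Real.pi_pos]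
  have h1 : μ T = 1 - μ Tᶜ := by
    have h2 := prob_compl_eq_one_sub (μ := μ) hTm.compl
    rwa [compl_compl] at h2
  calc ENNReal.ofReal (1 - δ) = 1 - ENNReal.ofReal δ := by
        rw [ENNReal.ofReal_sub 1 hδ0.le, ENNReal.ofReal_one]
    _ ≤ 1 - μ Tᶜ := tsub_le_tsub_left hcompl 1
    _ = μ T := h1.symm
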